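/- With R, D, d_n, e_n as above, in Der(R) one has [d_m, e_n] = (n−m−1) e_{m+n+1} + (4n−4m−2) e_{m+n}. -/

import Mathlib

set_option synthInstance.maxHeartbeats 1000000
set_option maxHeartbeats 1000000

open MvPolynomial in
/-- `R = ℂ[t, t⁻¹, u] / (u² − t² − 4t)`, modelled as `ℂ[x₀,x₁,x₂]` modulo the
ideal generated by `x₀x₁ − 1` (making `x₀ = t` invertible with inverse `x₁`)
and `x₂² − x₀² − 4x₀`. -/
noncomputable abbrev R3 : Type :=
  MvPolynomial (Fin 3) ℂ ⧸
    Ideal.span {(X 0 * X 1 - 1 : MvPolynomial (Fin 3) ℂ), X 2 ^ 2 - X 0 ^ 2 - 4 * X 0}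

open MvPolynomial in
/-- the class of `t` in `R`. -/
noncomputable def tR : R3 := Ideal.Quotient.mk _ (X 0)

open MvPolynomial in
/-- the class of `t⁻¹` in `R`. -/
noncomputable def tinv : R3 := Ideal.Quotient.mk _ (X 1)

open MvPolynomial in
/-- the class of `u` in `R`. -/
noncomputable def uR : R3 := Ideal.Quotient.mk _ (X 2)

/-- integer powers `tⁿ` of the invertible element `t` of `R`. -/
noncomputable def tpow (n : ℤ) : R3 := if 0 ≤ n then tR ^ n.toNat else tinv ^ (-n).toNat

/-- `eR n = tⁿ D ∈ Der(R)` for a derivation `D`. -/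
noncomputable def eR (D : Derivation ℂ R3 R3) (n : ℤ) : Derivation ℂ R3 R3 :=
  tpow n • D

/-- `dR n = tⁿ u D ∈ Der(R)` for a derivation `D`. -/
noncomputable def dR (D : Derivation ℂ R3 R3) (n : ℤ) : Derivation ℂ R3 R3 :=
  (tpow n * uR) • D

open MvPolynomial in
lemma t_mul_tinv : tR * tinv = 1 := by
  have h : (Ideal.Quotient.mk _ (X 0 * X 1 - 1 : MvPolynomial (Fin 3) ℂ) : R3) = 0 := by
    rw [Ideal.Quotient.eq_zero_iff_mem]
    exact Ideal.subset_span (Set.mem_insert _ _)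
  rw [map_sub, map_mul, map_one, sub_eq_zero] at h
  exact h

open MvPolynomial in
lemma u_sq : uR * uR = tR ^ 2 + 4 * tR := by
  have h : (Ideal.Quotient.mk _ (X 2 ^ 2 - X 0 ^ 2 - 4 * X 0 : MvPolynomial (Fin 3) ℂ) : R3) = 0 := by
    rw [Ideal.Quotient.eq_zero_iff_mem]
    exact Ideal.subset_span (Set.mem_insert_of_mem _ rfl)
  rw [map_sub, map_sub, map_pow, map_pow, map_mul, map_ofNat] at h
  unfold uR tR
  linear_combination h

noncomputable def tU : R3ˣ := ⟨tR, tinv, t_mul_tinv, by rw [mul_comm]; exact t_mul_tinv⟩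

lemma tpow_eq (n : ℤ) : tpow n = ((tU ^ n : R3ˣ) : R3) := by
  obtain ⟨k, rfl | rfl⟩ := n.eq_nat_or_neg
  · simp [tpow, zpow_natCast, Units.val_pow_eq_pow_val, tU]
  · rcases Nat.eq_zero_or_pos k with hk | hk
    · subst hk; simp [tpow, tU]
    · have h1 : ¬ (0 ≤ -(k:ℤ)) := by omega
      simp only [tpow, h1, if_false, neg_neg, Int.toNat_natCast]
      rw [zpow_neg, zpow_natCast, ← inv_pow, Units.val_pow_eq_pow_val]
      rfl

lemma tpow_add (a b : ℤ) : tpow (a + b) = tpow a * tpow b := by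
  rw [tpow_eq, tpow_eq, tpow_eq, zpow_add, Units.val_mul]

lemma tpow_zero : tpow 0 = 1 := by simp [tpow]
lemma tpow_one : tpow 1 = tR := by simp [tpow]
lemma tpow_neg_one : tpow (-1) = tinv := by simp [tpow]

lemma D_tinv (D : Derivation ℂ R3 R3) (hDt : D tR = uR) :
    D tinv = -(tinv * tinv * uR) := by
  have h := D.leibniz tR tinv
  rw [t_mul_tinv, Derivation.map_one_eq_zero, hDt, smul_eq_mul, smul_eq_mul] at h
  linear_combination tinv * h.symm + (-(D tinv)) * t_mul_tinv

lemma D_tpow (D : Derivation ℂ R3 R3) (hDt : D tR = uR) (n : ℤ) :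
    D (tpow n) = (n : R3) * tpow n * tinv * uR := by
  induction n using Int.induction_on with
  | zero => simp [tpow_zero]
  | succ k ih =>
    have hs : tpow ((k:ℤ) + 1) = tpow (k:ℤ) * tR := by rw [← tpow_one, ← tpow_add]
    rw [hs, D.leibniz, ih, hDt, smul_eq_mul, smul_eq_mul]
    push_cast
    linear_combination (-(tpow (k:ℤ) * uR)) * t_mul_tinv
  | pred k ih =>
    have hs : tpow (-(k:ℤ) - 1) = tpow (-(k:ℤ)) * tinv := by
      rw [← tpow_neg_one, ← tpow_add]; ring_nf
    rw [hs, D.leibniz, ih, D_tinv D hDt, smul_eq_mul, smul_eq_mul]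
    push_cast
    ring

lemma bracket_smul (D : Derivation ℂ R3 R3) (f g : R3) :
    ⁅f • D, g • D⁆ = (f * D g - g * D f) • D := by
  ext a
  simp only [Derivation.commutator_apply, Derivation.smul_apply, smul_eq_mul, D.leibniz,
    Derivation.coe_smul, Pi.smul_apply]
  ring

lemma add_smul_D (D : Derivation ℂ R3 R3) (f g : R3) :
    f • D + g • D = (f + g) • D := by
  ext a
  simp [add_mul]

lemma zsmul_smul_D (D : Derivation ℂ R3 R3) (k : ℤ) (f : R3) :
    k • (f • D) = ((k : R3) * f) • D := by
  ext a
  rw [← Int.cast_smul_eq_zsmul R3]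
  simp [smul_smul, mul_assoc]

/-- For any derivation `D` of `R` with `D t = u` and `D u = t + 2` (i.e. the
derivation `(t+2)∂ᵤ + u∂ₜ`), one has
`[dₘ, eₙ] = (n − m − 1) e_{m+n+1} + (4n − 4m − 2) e_{m+n}` in `Der(R)`. -/
theorem stmt16 (D : Derivation ℂ R3 R3) (hDt : D tR = uR) (hDu : D uR = tR + 2)
    (m n : ℤ) :
    ⁅dR D m, eR D n⁆ = (n - m - 1) • eR D (m + n + 1) + (4 * n - 4 * m - 2) • eR D (m + n) := by
  rw [dR, eR, bracket_smul, eR, eR, zsmul_smul_D, zsmul_smul_D, add_smul_D]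
  congr 1
  have e1 : tpow (m + n + 1) = tpow m * tpow n * tR := by
    rw [tpow_add, tpow_add, tpow_one]
  have e0 : tpow (m + n) = tpow m * tpow n := tpow_add m n
  rw [D.leibniz, D_tpow D hDt m, D_tpow D hDt n, hDu, e1, e0, smul_eq_mul, smul_eq_mul]
  push_cast
  linear_combination ((n:R3)-(m:R3))*tpow m*tpow n*tinv * u_sq + ((n:R3)-(m:R3))*tpow m*tpow n*(tR+4) * t_mul_tinv
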